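/- Let μ, ν be probability measures on ℝ with finite first moment with μ ≤_cx ν. Then for every lifted coupling π̂ = λ_{(0,1)}(du) δ_{F_μ^{-1}(u)}(dx) p_u(dy) between μ and ν, the infimum over all lifted martingale couplings M̂ ∈ Π̂^M(μ,ν) of the lifted adapted Wasserstein distance ÂW₁(π̂, M̂) is bounded below by ∫_{(0,1)} |∫_ℝ y p_u(dy) − F_μ^{-1}(u)| du. -/

import Mathlib

open MeasureTheory ProbabilityTheory Set Filter

noncomputable section

/-- Lebesgue measure restricted to `(0,1)`. -/
def lam01 : Measure ℝ := volume.restrict (Set.Ioo 0 1)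

/-- Cumulative distribution function `F_η(x) = η((-∞, x])`. -/
def Fcdf (η : Measure ℝ) (x : ℝ) : ℝ := (η (Set.Iic x)).toReal

/-- Left limit of the cumulative distribution function, `F_η(x-) = η((-∞, x))`. -/
def FcdfL (η : Measure ℝ) (x : ℝ) : ℝ := (η (Set.Iio x)).toReal

/-- Quantile function `F_η^{-1}(u) = inf {x : F_η(x) ≥ u}`. -/
def qf (η : Measure ℝ) (u : ℝ) : ℝ := sInf {x | u ≤ Fcdf η x}

/-- `π` is a coupling between `μ` and `ν`. -/
def IsCoupling (π : Measure (ℝ × ℝ)) (μ ν : Measure ℝ) : Prop :=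
  π.map Prod.fst = μ ∧ π.map Prod.snd = ν

/-- `W_ρ^ρ(η, η')`, the Wasserstein distance of order `ρ` raised to the power `ρ`. -/
def Wr (ρ : ℝ) (η η' : Measure ℝ) : ℝ :=
  sInf {c | ∃ π : Measure (ℝ × ℝ), IsCoupling π η η' ∧ c = ∫ p, |p.1 - p.2| ^ ρ ∂π}

/-- The Wasserstein distance of order `ρ`. -/
def W (ρ : ℝ) (η η' : Measure ℝ) : ℝ := Wr ρ η η' ^ (1 / ρ)

/-- The stochastic order `η ≤_st η'`: the quantile functions are ordered on `(0,1)`. -/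
def StochOrder (η η' : Measure ℝ) : Prop := ∀ u ∈ Set.Ioo (0 : ℝ) 1, qf η u ≤ qf η' u

/-- The convex order `μ ≤_cx ν`: `∫ f dμ ≤ ∫ f dν` for every (integrable) convex `f`. -/
def ConvexOrder (μ ν : Measure ℝ) : Prop :=
  ∀ f : ℝ → ℝ, ConvexOn ℝ Set.univ f → Integrable f μ → Integrable f ν →
    ∫ x, f x ∂μ ≤ ∫ x, f x ∂ν

/-- `AW_ρ^ρ(π, π')`, the adapted Wasserstein distance of order `ρ` raised to the power `ρ`:
the infimum over couplings `χ` between the first marginals of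
`∫ (|x-x'|^ρ + W_ρ^ρ(π_x, π'_{x'})) dχ`, where `κ, κ'` are disintegration kernels of `π, π'`. -/
def AWr (ρ : ℝ) (π π' : Measure (ℝ × ℝ)) : ℝ :=
  sInf {c | ∃ (χ : Measure (ℝ × ℝ)) (κ κ' : Kernel ℝ ℝ),
      IsCoupling χ (π.map Prod.fst) (π'.map Prod.fst) ∧
      π = (π.map Prod.fst).compProd κ ∧ π' = (π'.map Prod.fst).compProd κ' ∧
      c = ∫ q, (|q.1 - q.2| ^ ρ + Wr ρ (κ q.1) (κ' q.2)) ∂χ}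

/-- The adapted Wasserstein distance of order `ρ`. -/
def AW (ρ : ℝ) (π π' : Measure (ℝ × ℝ)) : ℝ := AWr ρ π π' ^ (1 / ρ)

/-- The lifted adapted Wasserstein distance of order `ρ`, raised to the power `ρ`, between the
lifted couplings with first marginals `μ, μ'` and kernels `p, p'`. -/
def lAWr (ρ : ℝ) (μ : Measure ℝ) (p : ℝ → Measure ℝ) (μ' : Measure ℝ)
    (p' : ℝ → Measure ℝ) : ℝ :=
  sInf {c | ∃ χ : Measure (ℝ × ℝ), IsCoupling χ lam01 lam01 ∧
      c = ∫ q, (|q.1 - q.2| ^ ρ + |qf μ q.1 - qf μ' q.2| ^ ρ + Wr ρ (p q.1) (p' q.2)) ∂χ}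

/-- The probability kernel `p` encodes a lifted coupling
`λ_{(0,1)}(du) δ_{F_μ^{-1}(u)}(dx) p_u(dy)` between `μ` and `ν`. -/
def IsLiftedCoupling (μ ν : Measure ℝ) (p : ℝ → Measure ℝ) : Prop :=
  Measurable p ∧ (∀ u, IsProbabilityMeasure (p u)) ∧ lam01.bind p = ν

/-- The probability kernel `m` encodes a lifted martingale coupling between `μ` and `ν`. -/
def IsLiftedMartingale (μ ν : Measure ℝ) (m : ℝ → Measure ℝ) : Prop :=
  IsLiftedCoupling μ ν m ∧ ∀ᵐ u ∂lam01, (∫ y, y ∂(m u)) = qf μ u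

end

noncomputable section
namespace StmtAux

open ENNReal Topology

lemma isProb_lam01 : IsProbabilityMeasure lam01 := by
  constructor
  simp [lam01, Real.volume_Ioo]

lemma Fcdf_nonneg (η : Measure ℝ) (x : ℝ) : 0 ≤ Fcdf η x := ENNReal.toReal_nonneg

lemma Fcdf_mono (η : Measure ℝ) [IsFiniteMeasure η] : Monotone (Fcdf η) := fun a b hab =>
  ENNReal.toReal_mono (measure_ne_top η _) (measure_mono (Set.Iic_subset_Iic.2 hab))

lemma Fcdf_le_one (η : Measure ℝ) [IsProbabilityMeasure η] (x : ℝ) : Fcdf η x ≤ 1 := by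
  have h : η (Set.Iic x) ≤ 1 := prob_le_one
  have := ENNReal.toReal_mono (by simp) h
  simpa [Fcdf] using this

lemma ofReal_Fcdf (η : Measure ℝ) [IsFiniteMeasure η] (x : ℝ) :
    ENNReal.ofReal (Fcdf η x) = η (Set.Iic x) := by
  rw [Fcdf, ENNReal.ofReal_toReal (measure_ne_top η _)]

/-- There is a point where the cdf is below any positive level. -/
lemma exists_Fcdf_lt (η : Measure ℝ) [IsFiniteMeasure η] {u : ℝ} (hu : 0 < u) :
    ∃ x : ℝ, Fcdf η x < u := by
  have h : Tendsto (fun n : ℕ => η (Set.Iic (-(n : ℝ)))) atTop (𝓝 (η (⋂ n : ℕ, Set.Iic (-(n : ℝ))))) := by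
    apply tendsto_measure_iInter_atTop
    · exact fun n => (measurableSet_Iic).nullMeasurableSet
    · intro a b hab
      apply Set.Iic_subset_Iic.2
      have : (a:ℝ) ≤ b := Nat.cast_le.2 hab
      linarith
    · exact ⟨0, measure_ne_top η _⟩
  have hempty : (⋂ n : ℕ, Set.Iic (-(n : ℝ))) = ∅ := by
    ext x
    simp only [Set.mem_iInter, Set.mem_Iic, Set.mem_empty_iff_false, iff_false, not_forall]
    obtain ⟨n, hn⟩ := exists_nat_gt (-x)
    exact ⟨n, by push_cast; linarith⟩
  rw [hempty, measure_empty] at h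
  have := h.eventually_lt_const (by simp [hu] : (0:ℝ≥0∞) < ENNReal.ofReal u)
  obtain ⟨n, hn⟩ := this.exists
  refine ⟨-(n:ℝ), ?_⟩
  have := ENNReal.toReal_strict_mono (by simp) hn
  simpa [Fcdf, ENNReal.toReal_ofReal hu.le] using this

lemma exists_le_Fcdf (η : Measure ℝ) [IsProbabilityMeasure η] {u : ℝ} (hu : u < 1) :
    ∃ x : ℝ, u ≤ Fcdf η x := by
  rcases le_or_gt u 0 with h | h
  · exact ⟨0, h.trans (Fcdf_nonneg η 0)⟩
  have h1 : Tendsto (fun x : ℝ => η (Set.Iic x)) atTop (𝓝 (η Set.univ)) :=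
    tendsto_measure_Iic_atTop η
  have huniv : η Set.univ = 1 := measure_univ
  have := h1.eventually_const_lt (by rw [huniv]; exact ENNReal.ofReal_lt_one.2 hu)
  obtain ⟨x, hx⟩ := this.exists
  refine ⟨x, ?_⟩
  have := ENNReal.toReal_mono (measure_ne_top η _) hx.le
  simpa [Fcdf, ENNReal.toReal_ofReal h.le] using this

lemma bddBelow_S (η : Measure ℝ) [IsFiniteMeasure η] {u : ℝ} (hu : 0 < u) :
    BddBelow {x | u ≤ Fcdf η x} := by
  obtain ⟨x₀, hx₀⟩ := exists_Fcdf_lt η hu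
  refine ⟨x₀, fun y hy => ?_⟩
  by_contra hxy
  push_neg at hxy
  exact absurd (le_trans hy (Fcdf_mono η hxy.le)) (not_le.2 hx₀)

/-- Right-continuity: the infimum of the level set belongs to it. -/
lemma le_Fcdf_qf (η : Measure ℝ) [IsFiniteMeasure η] {u : ℝ} (hu : 0 < u)
    (hne : {x | u ≤ Fcdf η x}.Nonempty) : u ≤ Fcdf η (qf η u) := by
  set a := qf η u with ha
  have hbdd := bddBelow_S η hu
  -- for every x > a, u ≤ Fcdf η x
  have key : ∀ x, a < x → u ≤ Fcdf η x := by
    intro x hx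
    obtain ⟨s, hs, hsx⟩ := (csInf_lt_iff hbdd hne).1 hx
    exact le_trans hs (Fcdf_mono η hsx.le)
  have h : Tendsto (fun n : ℕ => η (Set.Iic (a + 1/(n+1)))) atTop
      (𝓝 (η (⋂ n : ℕ, Set.Iic (a + 1/(n+1))))) := by
    apply tendsto_measure_iInter_atTop
    · exact fun n => (measurableSet_Iic).nullMeasurableSet
    · intro i j hij
      apply Set.Iic_subset_Iic.2
      have : (1:ℝ)/(j+1) ≤ 1/(i+1) := by
        apply div_le_div_of_nonneg_left one_pos.le (by positivity)
        exact_mod_cast by omega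
      linarith
    · exact ⟨0, measure_ne_top η _⟩
  have hiInter : (⋂ n : ℕ, Set.Iic (a + 1/(n+1))) = Set.Iic a := by
    ext x
    simp only [Set.mem_iInter, Set.mem_Iic]
    constructor
    · intro hx
      by_contra hax
      push_neg at hax
      obtain ⟨n, hn⟩ := exists_nat_gt (1/(x - a))
      have hxa : 0 < x - a := by linarith
      have h1 : (1:ℝ)/(n+1) < x - a := by
        rw [div_lt_iff₀ (by positivity)]
        rw [div_lt_iff₀ hxa] at hn
        nlinarith [hn, hxa]
      exact absurd (hx n) (by linarith)
    · intro hx n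
      have : (0:ℝ) < 1/(n+1) := by positivity
      linarith
  rw [hiInter] at h
  have hle : ENNReal.ofReal u ≤ η (Set.Iic a) := by
    apply ge_of_tendsto h
    apply Filter.Eventually.of_forall
    intro n
    have hk := key (a + 1/(n+1)) (lt_add_of_pos_right a (by positivity))
    rw [← ofReal_Fcdf]
    exact ENNReal.ofReal_le_ofReal hk
  have := ENNReal.toReal_mono (measure_ne_top η _) hle
  simpa [Fcdf, ENNReal.toReal_ofReal hu.le] using this

-- chunk 2 (appended after removing `end StmtAux`)
/-- Galois connection of the quantile function. -/
lemma qf_le_iff (η : Measure ℝ) [IsFiniteMeasure η] {u : ℝ} (hu : 0 < u)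
    (hne : {x | u ≤ Fcdf η x}.Nonempty) (x : ℝ) :
    qf η u ≤ x ↔ u ≤ Fcdf η x := by
  constructor
  · intro h
    exact le_trans (le_Fcdf_qf η hu hne) (Fcdf_mono η h)
  · intro h
    exact csInf_le (bddBelow_S η hu) h

lemma qf_le_iff' (η : Measure ℝ) [IsProbabilityMeasure η] {u : ℝ} (hu : u ∈ Set.Ioo (0:ℝ) 1)
    (x : ℝ) : qf η u ≤ x ↔ u ≤ Fcdf η x :=
  qf_le_iff η hu.1 (exists_le_Fcdf η hu.2) x

lemma qf_nonpos_val (η : Measure ℝ) {u : ℝ} (hu : u ≤ 0) : qf η u = 0 := by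
  have : {x | u ≤ Fcdf η x} = Set.univ := by
    ext x; simp [le_trans hu (Fcdf_nonneg η x)]
  rw [qf, this]
  apply Real.sInf_of_not_bddBelow
  rintro ⟨b, hb⟩
  have h1 := hb (Set.mem_univ (b - 1))
  linarith

lemma qf_gt_one_val (η : Measure ℝ) [IsProbabilityMeasure η] {u : ℝ} (hu : 1 < u) :
    qf η u = 0 := by
  have : {x | u ≤ Fcdf η x} = ∅ := by
    ext x
    simp only [Set.mem_setOf_eq, Set.mem_empty_iff_false, iff_false, not_le]
    exact lt_of_le_of_lt (Fcdf_le_one η x) hu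
  rw [qf, this, Real.sInf_empty]

/-- Description of `qf η 1`. -/
lemma qf_one_le_iff (η : Measure ℝ) [IsProbabilityMeasure η] (x : ℝ) :
    qf η 1 ≤ x ↔ ((1:ℝ) ≤ Fcdf η x ∨ ({y | (1:ℝ) ≤ Fcdf η y} = ∅ ∧ 0 ≤ x)) := by
  rcases Set.eq_empty_or_nonempty {y | (1:ℝ) ≤ Fcdf η y} with he | hne
  · have h0 : qf η 1 = 0 := by rw [qf, he, Real.sInf_empty]
    simp only [h0]
    constructor
    · intro hx; right; exact ⟨he, hx⟩
    · rintro (h | ⟨_, h⟩)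
      · exact absurd h (by have := Set.eq_empty_iff_forall_notMem.1 he x; simpa using this)
      · exact h
  · rw [qf_le_iff η one_pos hne x]
    constructor
    · intro h; left; exact h
    · rintro (h | ⟨he, _⟩)
      · exact h
      · exact absurd hne (by rw [he]; exact Set.not_nonempty_empty)

/-- Joint measurability of the quantile function of a measurable family. -/
lemma measurable_qf_family {α : Type*} [MeasurableSpace α] (P : α → Measure ℝ)
    (hP : Measurable P) (hprob : ∀ a, IsProbabilityMeasure (P a)) :
    Measurable (fun q : α × ℝ => qf (P q.1) q.2) := by
  apply measurable_of_Iic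
  intro x
  have hF : ∀ y : ℝ, Measurable (fun a => Fcdf (P a) y) := by
    intro y
    exact (Measure.measurable_coe measurableSet_Iic).comp hP |>.ennreal_toReal
  have hdec : (fun q : α × ℝ => qf (P q.1) q.2) ⁻¹' Set.Iic x =
      ((Set.univ ×ˢ (Set.Iic (0:ℝ) ∪ Set.Ioi 1)) ∩ {q | (0:ℝ) ≤ x}) ∪
      ({q : α × ℝ | q.2 ∈ Set.Ioo (0:ℝ) 1 ∧ q.2 ≤ Fcdf (P q.1) x}) ∪
      ({a : α | (1:ℝ) ≤ Fcdf (P a) x ∨ ({y | (1:ℝ) ≤ Fcdf (P a) y} = ∅ ∧ 0 ≤ x)} ×ˢ {(1:ℝ)}) := by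
    ext ⟨a, s⟩
    simp only [Set.mem_preimage, Set.mem_Iic, Set.mem_union, Set.mem_inter_iff, Set.mem_prod,
      Set.mem_univ, true_and, Set.mem_setOf_eq, Set.mem_singleton_iff, Set.mem_Ioi, Set.mem_Ioo]
    haveI := hprob a
    rcases lt_trichotomy s 1 with hs1 | hs1 | hs1
    · rcases le_or_gt s 0 with hs0 | hs0
      · simp [qf_nonpos_val (P a) hs0, hs0, (by linarith : ¬ (1:ℝ) < s), (by linarith : s ≠ 1)]
      · rw [qf_le_iff' (P a) ⟨hs0, hs1⟩ x]
        simp [hs0, hs1, (by linarith : ¬ s ≤ (0:ℝ)), (by linarith : ¬ (1:ℝ) < s),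
          (by linarith : s ≠ 1)]
    · subst hs1
      rw [qf_one_le_iff (P a) x]
      simp
    · simp [qf_gt_one_val (P a) hs1, hs1, (by linarith : ¬ s ≤ (0:ℝ)),
        (by linarith : ¬ s < 1), (by linarith : s ≠ 1), le_of_lt hs1]
  rw [hdec]
  apply MeasurableSet.union
  apply MeasurableSet.union
  · rcases le_or_gt 0 x with hx | hx
    · simp only [hx]
      exact (MeasurableSet.univ.prod (measurableSet_Iic.union measurableSet_Ioi)).inter
        (by simp [hx, Set.setOf_true])
    · have : {q : α × ℝ | (0:ℝ) ≤ x} = ∅ := by ext q; simp [not_le.2 hx]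
      rw [this, Set.inter_empty]; exact MeasurableSet.empty
  · have : {q : α × ℝ | q.2 ∈ Set.Ioo (0:ℝ) 1 ∧ q.2 ≤ Fcdf (P q.1) x} =
        {q : α × ℝ | q.2 ∈ Set.Ioo (0:ℝ) 1} ∩ {q | q.2 ≤ Fcdf (P q.1) x} := by
      ext q; simp [Set.mem_setOf_eq]
    rw [this]
    exact (measurable_snd measurableSet_Ioo).inter
      (measurableSet_le measurable_snd ((hF x).comp measurable_fst))
  · apply MeasurableSet.prod
    · apply MeasurableSet.union
      · exact measurableSet_le measurable_const (hF x)
      · apply MeasurableSet.inter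
        · show MeasurableSet {a : α | {y | (1:ℝ) ≤ Fcdf (P a) y} = ∅}
          have : {a : α | {y | (1:ℝ) ≤ Fcdf (P a) y} = ∅} =
              ⋂ n : ℕ, {a | Fcdf (P a) n < 1} := by
            ext a
            simp only [Set.mem_setOf_eq, Set.eq_empty_iff_forall_notMem, Set.mem_iInter]
            constructor
            · intro h n; exact lt_of_not_ge (h n)
            · intro h y hy
              obtain ⟨n, hn⟩ := exists_nat_gt y
              haveI := hprob a
              exact absurd (le_trans hy (Fcdf_mono (P a) hn.le)) (not_le.2 (h n))
          rw [this]
          exact MeasurableSet.iInter fun n => measurableSet_lt (hF n) measurable_const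
        · show MeasurableSet {a : α | (0:ℝ) ≤ x}
          rcases le_or_gt 0 x with hx | hx
          · have : {a : α | (0:ℝ) ≤ x} = Set.univ := by ext a; simp [hx]
            rw [this]; exact MeasurableSet.univ
          · have : {a : α | (0:ℝ) ≤ x} = ∅ := by ext a; simp [not_le.2 hx]
            rw [this]; exact MeasurableSet.empty
    · exact measurableSet_singleton 1

lemma measurable_qf (η : Measure ℝ) [IsProbabilityMeasure η] : Measurable (qf η) := by
  have := measurable_qf_family (fun _ : Unit => η) measurable_const (fun _ => inferInstance)
  exact this.comp ((measurable_const.prodMk measurable_id :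
    Measurable fun s : ℝ => (((), s) : Unit × ℝ)))

/-- Inverse transform sampling: the quantile function pushes `lam01` to `η`. -/
lemma map_qf (η : Measure ℝ) [IsProbabilityMeasure η] :
    lam01.map (qf η) = η := by
  haveI := isProb_lam01
  haveI : IsProbabilityMeasure (lam01.map (qf η)) :=
    Measure.isProbabilityMeasure_map (measurable_qf η).aemeasurable
  apply MeasureTheory.Measure.ext_of_Iic
  intro x
  rw [Measure.map_apply (measurable_qf η) measurableSet_Iic]
  have hset : qf η ⁻¹' Set.Iic x ∩ Set.Ioo 0 1 = Set.Iic (Fcdf η x) ∩ Set.Ioo 0 1 := by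
    ext u
    simp only [Set.mem_inter_iff, Set.mem_preimage, Set.mem_Iic, Set.mem_Ioo, and_congr_left_iff]
    intro hu
    rw [qf_le_iff' η hu x]
  have : lam01 (qf η ⁻¹' Set.Iic x) = volume (qf η ⁻¹' Set.Iic x ∩ Set.Ioo 0 1) := by
    rw [lam01, Measure.restrict_apply ((measurable_qf η) measurableSet_Iic)]
  rw [this, hset]
  have h0 : 0 ≤ Fcdf η x := Fcdf_nonneg η x
  have h1 : Fcdf η x ≤ 1 := Fcdf_le_one η x
  have hsub1 : Set.Ioo (0:ℝ) (Fcdf η x) ⊆ Set.Iic (Fcdf η x) ∩ Set.Ioo 0 1 := by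
    rintro s ⟨hs1, hs2⟩
    exact ⟨hs2.le, hs1, lt_of_lt_of_le hs2 h1⟩
  have hsub2 : Set.Iic (Fcdf η x) ∩ Set.Ioo 0 1 ⊆ Set.Ioc (0:ℝ) (Fcdf η x) := by
    rintro s ⟨hs1, hs2, _⟩
    exact ⟨hs2, hs1⟩
  have hv : volume (Set.Iic (Fcdf η x) ∩ Set.Ioo 0 1) = ENNReal.ofReal (Fcdf η x) := by
    apply le_antisymm
    · have h2 := measure_mono (μ := volume) hsub2
      have h3 : volume (Set.Ioc (0:ℝ) (Fcdf η x)) = ENNReal.ofReal (Fcdf η x) := by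
        rw [Real.volume_Ioc, sub_zero]
      rw [h3] at h2; exact h2
    · have h2 := measure_mono (μ := volume) hsub1
      have h3 : volume (Set.Ioo (0:ℝ) (Fcdf η x)) = ENNReal.ofReal (Fcdf η x) := by
        rw [Real.volume_Ioo, sub_zero]
      rw [h3] at h2; exact h2
  rw [hv, ofReal_Fcdf]

lemma lintegral_qf (η : Measure ℝ) [IsProbabilityMeasure η] {f : ℝ → ℝ≥0∞}
    (hf : Measurable f) : ∫⁻ u, f (qf η u) ∂lam01 = ∫⁻ y, f y ∂η := by
  conv_rhs => rw [← map_qf η]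
  rw [lintegral_map hf (measurable_qf η)]

lemma integral_qf (η : Measure ℝ) [IsProbabilityMeasure η] {f : ℝ → ℝ}
    (hf : AEStronglyMeasurable f η) : ∫ u, f (qf η u) ∂lam01 = ∫ y, f y ∂η := by
  conv_rhs => rw [← map_qf η]
  rw [integral_map (measurable_qf η).aemeasurable (by rw [map_qf η]; exact hf)]

/-- First absolute moment, as a lower integral. -/
def L (η : Measure ℝ) : ℝ≥0∞ := ∫⁻ y, ENNReal.ofReal |y| ∂η

/-- `∫₀¹ |F_η⁻¹ - F_η'⁻¹|` as a lower integral. -/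
def J (η η' : Measure ℝ) : ℝ≥0∞ := ∫⁻ s, ENNReal.ofReal |qf η s - qf η' s| ∂lam01

lemma coupling_lintegral_fst {π : Measure (ℝ × ℝ)} {η η' : Measure ℝ}
    (hπ : IsCoupling π η η') {f : ℝ → ℝ≥0∞} (hf : Measurable f) :
    ∫⁻ ω, f ω.1 ∂π = ∫⁻ y, f y ∂η := by
  rw [← hπ.1, lintegral_map hf measurable_fst]

lemma coupling_lintegral_snd {π : Measure (ℝ × ℝ)} {η η' : Measure ℝ}
    (hπ : IsCoupling π η η') {f : ℝ → ℝ≥0∞} (hf : Measurable f) :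
    ∫⁻ ω, f ω.2 ∂π = ∫⁻ y, f y ∂η' := by
  rw [← hπ.2, lintegral_map hf measurable_snd]

lemma cost_eq_toReal (π : Measure (ℝ × ℝ)) :
    ∫ ω, |ω.1 - ω.2| ^ (1:ℝ) ∂π = (∫⁻ ω, ENNReal.ofReal |ω.1 - ω.2| ∂π).toReal := by
  have h1 : ∀ ω : ℝ × ℝ, |ω.1 - ω.2| ^ (1:ℝ) = |ω.1 - ω.2| := fun ω => Real.rpow_one _
  simp only [h1]
  rw [integral_eq_lintegral_of_nonneg_ae (f := fun ω : ℝ × ℝ => |ω.1 - ω.2|)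
    (Filter.Eventually.of_forall fun ω => abs_nonneg _)
    ((measurable_fst.sub measurable_snd).abs.aestronglyMeasurable)]

lemma Iπ_le_L {π : Measure (ℝ × ℝ)} {η η' : Measure ℝ} (hπ : IsCoupling π η η') :
    ∫⁻ ω, ENNReal.ofReal |ω.1 - ω.2| ∂π ≤ L η + L η' := by
  have h1 : ∫⁻ ω, ENNReal.ofReal |ω.1 - ω.2| ∂π ≤
      ∫⁻ ω, (ENNReal.ofReal |ω.1| + ENNReal.ofReal |ω.2|) ∂π := by
    apply lintegral_mono
    intro ω
    dsimp only
    rw [← ENNReal.ofReal_add (abs_nonneg _) (abs_nonneg _)]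
    exact ENNReal.ofReal_le_ofReal (abs_sub _ _)
  rw [lintegral_add_left (measurable_fst.abs.ennreal_ofReal)] at h1
  rw [coupling_lintegral_fst hπ measurable_abs.ennreal_ofReal,
    coupling_lintegral_snd hπ measurable_abs.ennreal_ofReal] at h1
  exact h1

lemma coupling_prob {π : Measure (ℝ × ℝ)} {η η' : Measure ℝ} [IsProbabilityMeasure η]
    (hπ : IsCoupling π η η') : IsProbabilityMeasure π := by
  constructor
  have : π.map Prod.fst Set.univ = 1 := by rw [hπ.1]; exact measure_univ
  rwa [Measure.map_apply measurable_fst MeasurableSet.univ, Set.preimage_univ] at this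

lemma prod_isCoupling (η η' : Measure ℝ) [IsProbabilityMeasure η] [IsProbabilityMeasure η'] :
    IsCoupling (η.prod η') η η' := by
  constructor
  · rw [Measure.map_fst_prod]; simp
  · rw [Measure.map_snd_prod]; simp

lemma Wr_mem_nonneg {η η' : Measure ℝ} {c : ℝ}
    (hc : c ∈ {c | ∃ π : Measure (ℝ × ℝ), IsCoupling π η η' ∧
      c = ∫ p, |p.1 - p.2| ^ (1:ℝ) ∂π}) : 0 ≤ c := by
  obtain ⟨π, _, rfl⟩ := hc
  rw [cost_eq_toReal]
  exact ENNReal.toReal_nonneg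

/-- The mean gap lower bound for the `W₁` cost. -/
lemma mean_gap (η η' : Measure ℝ) [IsProbabilityMeasure η] [IsProbabilityMeasure η']
    (hL : L η ≠ ⊤) (hL' : L η' ≠ ⊤) :
    |(∫ x, x ∂η) - ∫ x, x ∂η'| ≤ Wr 1 η η' := by
  rw [Wr]
  refine le_csInf ⟨_, η.prod η', prod_isCoupling η η', rfl⟩ ?_
  rintro c ⟨π, hπ, rfl⟩
  have hi1 : Integrable (fun ω : ℝ × ℝ => ω.1) π := by
    refine ⟨measurable_fst.aestronglyMeasurable, ?_⟩
    rw [hasFiniteIntegral_iff_norm]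
    have : ∀ ω : ℝ × ℝ, ENNReal.ofReal ‖ω.1‖ = ENNReal.ofReal |ω.1| := by
      intro ω; rw [Real.norm_eq_abs]
    simp only [this]
    rw [coupling_lintegral_fst hπ measurable_abs.ennreal_ofReal]
    exact hL.lt_top
  have hi2 : Integrable (fun ω : ℝ × ℝ => ω.2) π := by
    refine ⟨measurable_snd.aestronglyMeasurable, ?_⟩
    rw [hasFiniteIntegral_iff_norm]
    have : ∀ ω : ℝ × ℝ, ENNReal.ofReal ‖ω.2‖ = ENNReal.ofReal |ω.2| := by
      intro ω; rw [Real.norm_eq_abs]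
    simp only [this]
    rw [coupling_lintegral_snd hπ measurable_abs.ennreal_ofReal]
    exact hL'.lt_top
  have hfst : ∫ ω, ω.1 ∂π = ∫ x, x ∂η := by
    rw [← hπ.1]
    exact (integral_map (f := fun x : ℝ => x) measurable_fst.aemeasurable
      measurable_id.aestronglyMeasurable).symm
  have hsnd : ∫ ω, ω.2 ∂π = ∫ x, x ∂η' := by
    rw [← hπ.2]
    exact (integral_map (f := fun x : ℝ => x) measurable_snd.aemeasurable
      measurable_id.aestronglyMeasurable).symm
  rw [← hfst, ← hsnd, ← integral_sub hi1 hi2]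
  have h2 : |∫ ω, (ω.1 - ω.2) ∂π| ≤ ∫ ω, |ω.1 - ω.2| ∂π := by
    have := norm_integral_le_integral_norm (μ := π) (f := fun ω : ℝ × ℝ => ω.1 - ω.2)
    simpa [Real.norm_eq_abs] using this
  refine h2.trans (le_of_eq ?_)
  congr 1
  ext ω
  rw [Real.rpow_one]

/-- The layer function for the layer-cake representation of `|a - b|`. -/
def gfun : (ℝ × ℝ) × ℝ → ℝ≥0∞ := fun z =>
  Set.indicator {z : (ℝ × ℝ) × ℝ | z.1.1 ≤ z.2 ∧ z.2 < z.1.2} 1 z +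
  Set.indicator {z : (ℝ × ℝ) × ℝ | z.1.2 ≤ z.2 ∧ z.2 < z.1.1} 1 z

lemma measurableSet_S1 : MeasurableSet {z : (ℝ × ℝ) × ℝ | z.1.1 ≤ z.2 ∧ z.2 < z.1.2} :=
  (measurableSet_le (measurable_fst.comp measurable_fst) measurable_snd).inter
    (measurableSet_lt measurable_snd (measurable_snd.comp measurable_fst))

lemma measurableSet_S2 : MeasurableSet {z : (ℝ × ℝ) × ℝ | z.1.2 ≤ z.2 ∧ z.2 < z.1.1} :=
  (measurableSet_le (measurable_snd.comp measurable_fst) measurable_snd).inter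
    (measurableSet_lt measurable_snd (measurable_fst.comp measurable_fst))

lemma gfun_meas : Measurable gfun :=
  ((measurable_one).indicator measurableSet_S1).add
    ((measurable_one).indicator measurableSet_S2)

lemma ofReal_add_ofReal_neg (a : ℝ) :
    ENNReal.ofReal a + ENNReal.ofReal (-a) = ENNReal.ofReal |a| := by
  rcases le_total 0 a with h | h
  · rw [abs_of_nonneg h, ENNReal.ofReal_eq_zero.2 (by linarith : -a ≤ 0), add_zero]
  · rw [abs_of_nonpos h, ENNReal.ofReal_eq_zero.2 h, zero_add]

lemma lintegral_gfun (y : ℝ × ℝ) :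
    ∫⁻ t, gfun (y, t) ∂volume = ENNReal.ofReal |y.1 - y.2| := by
  have hfe : ∀ t, gfun (y, t) =
      Set.indicator (Set.Ico y.1 y.2) 1 t + Set.indicator (Set.Ico y.2 y.1) 1 t := by
    intro t
    unfold gfun
    simp [Set.indicator_apply, Set.mem_Ico, Set.mem_setOf_eq]
  simp only [hfe]
  rw [lintegral_add_left (measurable_one.indicator measurableSet_Ico),
    lintegral_indicator_one measurableSet_Ico, lintegral_indicator_one measurableSet_Ico,
    Real.volume_Ico, Real.volume_Ico]
  have h := ofReal_add_ofReal_neg (y.2 - y.1)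
  rw [show y.1 - y.2 = -(y.2 - y.1) by ring, h, abs_sub_comm]
  rw [abs_neg, abs_sub_comm]

/-- Section computation: integrating the layer function over a measure on `ℝ × ℝ`. -/
lemma lintegral_gfun_section (π : Measure (ℝ × ℝ)) (t : ℝ) :
    ∫⁻ ω, gfun (ω, t) ∂π =
      π {ω : ℝ × ℝ | ω.1 ≤ t ∧ t < ω.2} + π {ω : ℝ × ℝ | ω.2 ≤ t ∧ t < ω.1} := by
  have hA : MeasurableSet {ω : ℝ × ℝ | ω.1 ≤ t ∧ t < ω.2} :=
    (measurableSet_le measurable_fst measurable_const).inter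
      (measurableSet_lt measurable_const measurable_snd)
  have hB : MeasurableSet {ω : ℝ × ℝ | ω.2 ≤ t ∧ t < ω.1} :=
    (measurableSet_le measurable_snd measurable_const).inter
      (measurableSet_lt measurable_const measurable_fst)
  have hfe : ∀ ω : ℝ × ℝ, gfun (ω, t) =
      Set.indicator {ω : ℝ × ℝ | ω.1 ≤ t ∧ t < ω.2} 1 ω +
      Set.indicator {ω : ℝ × ℝ | ω.2 ≤ t ∧ t < ω.1} 1 ω := by
    intro ω
    unfold gfun
    simp [Set.indicator_apply, Set.mem_setOf_eq]
  simp only [hfe]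
  rw [lintegral_add_left (measurable_one.indicator hA),
    lintegral_indicator_one hA, lintegral_indicator_one hB]

/-- Quantile-side band measure. -/
lemma lam01_band (η η' : Measure ℝ) [IsProbabilityMeasure η] [IsProbabilityMeasure η']
    (t : ℝ) :
    lam01 {s : ℝ | qf η s ≤ t ∧ t < qf η' s} = ENNReal.ofReal (Fcdf η t - Fcdf η' t) := by
  rw [lam01, Measure.restrict_apply' measurableSet_Ioo]
  have hset : {s : ℝ | qf η s ≤ t ∧ t < qf η' s} ∩ Set.Ioo 0 1 =
      Set.Ioc (Fcdf η' t) (Fcdf η t) ∩ Set.Ioo 0 1 := by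
    ext s
    simp only [Set.mem_inter_iff, Set.mem_setOf_eq, Set.mem_Ioc, Set.mem_Ioo, and_congr_left_iff]
    intro hs
    rw [qf_le_iff' η hs t]
    constructor
    · rintro ⟨h1, h2⟩
      refine ⟨?_, h1⟩
      by_contra hc
      push_neg at hc
      exact absurd ((qf_le_iff' η' hs t).2 hc) (not_le.2 h2)
    · rintro ⟨h1, h2⟩
      refine ⟨h2, ?_⟩
      by_contra hc
      push_neg at hc
      exact absurd ((qf_le_iff' η' hs t).1 hc) (not_le.2 h1)
  rw [hset]
  set a := Fcdf η' t
  set b := Fcdf η t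
  have ha0 : 0 ≤ a := Fcdf_nonneg η' t
  have hb1 : b ≤ 1 := Fcdf_le_one η t
  apply le_antisymm
  · have h2 : volume (Set.Ioc a b ∩ Set.Ioo 0 1) ≤ volume (Set.Ioc a b) :=
      measure_mono Set.inter_subset_left
    rwa [Real.volume_Ioc] at h2
  · have hsub : Set.Ioo a b ⊆ Set.Ioc a b ∩ Set.Ioo 0 1 := by
      rintro s ⟨h1, h2⟩
      exact ⟨⟨h1, h2.le⟩, lt_of_le_of_lt ha0 h1, lt_of_lt_of_le h2 hb1⟩
    have h2 : volume (Set.Ioo a b) ≤ volume (Set.Ioc a b ∩ Set.Ioo 0 1) :=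
      measure_mono hsub
    rwa [Real.volume_Ioo] at h2

/-- π-side band bound (second orientation). -/
lemma pi_band_ge2 {π : Measure (ℝ × ℝ)} {η η' : Measure ℝ} [IsFiniteMeasure η]
    [IsFiniteMeasure η'] (hπ : IsCoupling π η η') (t : ℝ) :
    ENNReal.ofReal (Fcdf η' t - Fcdf η t) ≤ π {ω : ℝ × ℝ | ω.2 ≤ t ∧ t < ω.1} := by
  have h1 : π {ω : ℝ × ℝ | ω.1 ≤ t} = η (Set.Iic t) := by
    rw [← hπ.1, Measure.map_apply measurable_fst measurableSet_Iic]
    rfl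
  have h2 : π {ω : ℝ × ℝ | ω.2 ≤ t} = η' (Set.Iic t) := by
    rw [← hπ.2, Measure.map_apply measurable_snd measurableSet_Iic]
    rfl
  have hsub : {ω : ℝ × ℝ | ω.2 ≤ t} ⊆
      {ω : ℝ × ℝ | ω.2 ≤ t ∧ t < ω.1} ∪ {ω : ℝ × ℝ | ω.1 ≤ t} := by
    intro ω hω
    by_cases h : t < ω.1
    · exact Or.inl ⟨hω, h⟩
    · exact Or.inr (not_lt.1 h)
  have hm := (measure_mono (μ := π) hsub).trans (measure_union_le (μ := π) _ _)
  rw [h1, h2] at hm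
  have hofReal : ENNReal.ofReal (Fcdf η' t - Fcdf η t) =
      η' (Set.Iic t) - η (Set.Iic t) := by
    rw [ENNReal.ofReal_sub _ (Fcdf_nonneg η t), ofReal_Fcdf, ofReal_Fcdf]
  rw [hofReal]
  exact tsub_le_iff_right.2 hm

/-- π-side band bound. -/
lemma pi_band_ge {π : Measure (ℝ × ℝ)} {η η' : Measure ℝ} [IsFiniteMeasure η]
    [IsFiniteMeasure η'] (hπ : IsCoupling π η η') (t : ℝ) :
    ENNReal.ofReal (Fcdf η t - Fcdf η' t) ≤ π {ω : ℝ × ℝ | ω.1 ≤ t ∧ t < ω.2} := by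
  have h1 : π {ω : ℝ × ℝ | ω.1 ≤ t} = η (Set.Iic t) := by
    rw [← hπ.1, Measure.map_apply measurable_fst measurableSet_Iic]
    rfl
  have h2 : π {ω : ℝ × ℝ | ω.2 ≤ t} = η' (Set.Iic t) := by
    rw [← hπ.2, Measure.map_apply measurable_snd measurableSet_Iic]
    rfl
  have hsub : {ω : ℝ × ℝ | ω.1 ≤ t} ⊆
      {ω : ℝ × ℝ | ω.1 ≤ t ∧ t < ω.2} ∪ {ω : ℝ × ℝ | ω.2 ≤ t} := by
    intro ω hω
    by_cases h : t < ω.2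
    · exact Or.inl ⟨hω, h⟩
    · exact Or.inr (not_lt.1 h)
  have hm := (measure_mono (μ := π) hsub).trans (measure_union_le (μ := π) _ _)
  rw [h1, h2] at hm
  have hofReal : ENNReal.ofReal (Fcdf η t - Fcdf η' t) =
      η (Set.Iic t) - η' (Set.Iic t) := by
    rw [ENNReal.ofReal_sub _ (Fcdf_nonneg η' t), ofReal_Fcdf, ofReal_Fcdf]
  rw [hofReal]
  exact tsub_le_iff_right.2 hm

/-- Core lower bound: the `W₁` transport cost of any coupling dominates `J`. -/
lemma J_le_cost {π : Measure (ℝ × ℝ)} {η η' : Measure ℝ} [IsProbabilityMeasure η]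
    [IsProbabilityMeasure η'] (hπ : IsCoupling π η η') :
    J η η' ≤ ∫⁻ ω, ENNReal.ofReal |ω.1 - ω.2| ∂π := by
  haveI := coupling_prob hπ
  haveI := isProb_lam01
  -- π side
  have hπside : ∫⁻ ω, ENNReal.ofReal |ω.1 - ω.2| ∂π
      = ∫⁻ t, ∫⁻ ω, gfun (ω, t) ∂π ∂volume := by
    have h1 : ∫⁻ ω, ENNReal.ofReal |ω.1 - ω.2| ∂π
        = ∫⁻ ω, ∫⁻ t, gfun (ω, t) ∂volume ∂π := by
      apply lintegral_congr
      intro ω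
      rw [lintegral_gfun ω]
    rw [h1]
    exact lintegral_lintegral_swap gfun_meas.aemeasurable
  -- quantile side
  have hqside : J η η' = ∫⁻ t, ∫⁻ s, gfun ((qf η s, qf η' s), t) ∂lam01 ∂volume := by
    have h1 : J η η' = ∫⁻ s, ∫⁻ t, gfun ((qf η s, qf η' s), t) ∂volume ∂lam01 := by
      apply lintegral_congr
      intro s
      rw [lintegral_gfun (qf η s, qf η' s)]
    rw [h1]
    apply lintegral_lintegral_swap
    apply Measurable.aemeasurable
    exact gfun_meas.comp ((((measurable_qf η).comp measurable_fst).prodMk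
      ((measurable_qf η').comp measurable_fst)).prodMk measurable_snd)
  rw [hπside, hqside]
  apply lintegral_mono
  intro t
  -- compute the quantile-side inner integral
  have hqin : ∫⁻ s, gfun ((qf η s, qf η' s), t) ∂lam01 =
      ENNReal.ofReal (Fcdf η t - Fcdf η' t) + ENNReal.ofReal (Fcdf η' t - Fcdf η t) := by
    have h2 := lintegral_gfun_section (lam01.map (fun s => (qf η s, qf η' s))) t
    rw [lintegral_map (by
        have : Measurable fun ω : ℝ × ℝ => gfun (ω, t) :=
          gfun_meas.comp (measurable_id.prodMk measurable_const)
        exact this)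
      ((measurable_qf η).prodMk (measurable_qf η'))] at h2
    have hA : MeasurableSet {ω : ℝ × ℝ | ω.1 ≤ t ∧ t < ω.2} :=
      (measurableSet_le measurable_fst measurable_const).inter
        (measurableSet_lt measurable_const measurable_snd)
    have hB : MeasurableSet {ω : ℝ × ℝ | ω.2 ≤ t ∧ t < ω.1} :=
      (measurableSet_le measurable_snd measurable_const).inter
        (measurableSet_lt measurable_const measurable_fst)
    rw [h2, Measure.map_apply ((measurable_qf η).prodMk (measurable_qf η')) hA,
      Measure.map_apply ((measurable_qf η).prodMk (measurable_qf η')) hB]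
    have hp1 : (fun s => (qf η s, qf η' s)) ⁻¹' {ω : ℝ × ℝ | ω.1 ≤ t ∧ t < ω.2} =
        {s : ℝ | qf η s ≤ t ∧ t < qf η' s} := rfl
    have hp2 : (fun s => (qf η s, qf η' s)) ⁻¹' {ω : ℝ × ℝ | ω.2 ≤ t ∧ t < ω.1} =
        {s : ℝ | qf η' s ≤ t ∧ t < qf η s} := rfl
    rw [hp1, hp2, lam01_band η η' t, lam01_band η' η t]
  dsimp only
  rw [hqin, lintegral_gfun_section π t]
  exact add_le_add (pi_band_ge hπ t) (pi_band_ge2 hπ t)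

/-- The comonotone coupling. -/
lemma comonotone_isCoupling (η η' : Measure ℝ) [IsProbabilityMeasure η]
    [IsProbabilityMeasure η'] :
    IsCoupling (lam01.map fun s => (qf η s, qf η' s)) η η' := by
  constructor
  · rw [Measure.map_map measurable_fst ((measurable_qf η).prodMk (measurable_qf η'))]
    exact map_qf η
  · rw [Measure.map_map measurable_snd ((measurable_qf η).prodMk (measurable_qf η'))]
    exact map_qf η'

lemma comonotone_cost (η η' : Measure ℝ) [IsProbabilityMeasure η] [IsProbabilityMeasure η'] :
    ∫ ω, |ω.1 - ω.2| ^ (1:ℝ) ∂(lam01.map fun s => (qf η s, qf η' s)) = (J η η').toReal := by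
  rw [cost_eq_toReal]
  congr 1
  rw [lintegral_map (f := fun ω : ℝ × ℝ => ENNReal.ofReal |ω.1 - ω.2|)
    ((measurable_fst.sub measurable_snd).abs.ennreal_ofReal)
    ((measurable_qf η).prodMk (measurable_qf η'))]
  rfl

/-- The identity `W₁(η, η') = ∫₀¹ |F_η⁻¹ - F_{η'}⁻¹|` for finite first moments. -/
lemma W1_eq (η η' : Measure ℝ) [IsProbabilityMeasure η] [IsProbabilityMeasure η']
    (hL : L η ≠ ⊤) (hL' : L η' ≠ ⊤) :
    Wr 1 η η' = (J η η').toReal := by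
  apply le_antisymm
  · apply csInf_le ⟨0, fun c hc => Wr_mem_nonneg hc⟩
    exact ⟨lam01.map fun s => (qf η s, qf η' s), comonotone_isCoupling η η',
      (comonotone_cost η η').symm⟩
  · rw [Wr]
    refine le_csInf ⟨_, lam01.map fun s => (qf η s, qf η' s), comonotone_isCoupling η η',
      rfl⟩ ?_
    rintro c ⟨π, hπ, rfl⟩
    rw [cost_eq_toReal]
    apply ENNReal.toReal_mono
    · have hfin : L η + L η' < ⊤ := by
        rw [← lt_top_iff_ne_top] at hL hL'
        exact ENNReal.add_lt_top.2 ⟨hL, hL'⟩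
      exact ((Iπ_le_L hπ).trans_lt hfin).ne
    · exact J_le_cost hπ

/-- `Wr 1` upper bound by the sum of first moments. -/
lemma J_le_L_add_L (η η' : Measure ℝ) [IsProbabilityMeasure η] [IsProbabilityMeasure η'] :
    J η η' ≤ L η + L η' := by
  have h1 : J η η' ≤ ∫⁻ s, (ENNReal.ofReal |qf η s| + ENNReal.ofReal |qf η' s|) ∂lam01 := by
    apply lintegral_mono
    intro s
    dsimp only
    rw [← ENNReal.ofReal_add (abs_nonneg _) (abs_nonneg _)]
    exact ENNReal.ofReal_le_ofReal (abs_sub _ _)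
  rw [lintegral_add_left ((measurable_qf η).abs.ennreal_ofReal)] at h1
  rw [lintegral_qf η (f := fun y => ENNReal.ofReal |y|) measurable_abs.ennreal_ofReal,
    lintegral_qf η' (f := fun y => ENNReal.ofReal |y|) measurable_abs.ennreal_ofReal] at h1
  exact h1

lemma L_ne_top_of_integrable {η : Measure ℝ} (h : Integrable (fun x => |x|) η) : L η ≠ ⊤ := by
  have h2 := h.2
  rw [hasFiniteIntegral_iff_norm] at h2
  have : ∀ x : ℝ, ENNReal.ofReal ‖|x|‖ = ENNReal.ofReal |x| := by
    intro x; rw [Real.norm_eq_abs, abs_abs]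
  simp only [this] at h2
  exact h2.ne

lemma integrable_id_of_L {η : Measure ℝ} (h : L η ≠ ⊤) : Integrable (fun x : ℝ => x) η := by
  refine ⟨measurable_id.aestronglyMeasurable, ?_⟩
  rw [hasFiniteIntegral_iff_norm]
  have : ∀ x : ℝ, ENNReal.ofReal ‖x‖ = ENNReal.ofReal |x| := by
    intro x; rw [Real.norm_eq_abs]
  simp only [this]
  exact h.lt_top

lemma integrable_qf_of {η : Measure ℝ} [IsProbabilityMeasure η] (h : L η ≠ ⊤) :
    Integrable (qf η) lam01 := by
  have hid := integrable_id_of_L h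
  rw [← map_qf η] at hid
  exact (integrable_map_measure measurable_id.aestronglyMeasurable
    (measurable_qf η).aemeasurable).1 hid

lemma ae_fst_mem {χ : Measure (ℝ × ℝ)} {κ : Measure ℝ} (h : χ.map Prod.fst = κ)
    {S : Set ℝ} (hS : MeasurableSet S) (hae : ∀ᵐ u ∂κ, u ∈ S) : ∀ᵐ q ∂χ, q.1 ∈ S := by
  rw [ae_iff] at hae ⊢
  have h2 : {q : ℝ × ℝ | ¬ q.1 ∈ S} = Prod.fst ⁻¹' {u | ¬ u ∈ S} := rfl
  have h3 : {u : ℝ | ¬ u ∈ S} = Sᶜ := rfl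
  rw [h2, h3, ← Measure.map_apply measurable_fst hS.compl, h]
  rwa [h3] at hae

lemma ae_snd_mem {χ : Measure (ℝ × ℝ)} {κ : Measure ℝ} (h : χ.map Prod.snd = κ)
    {S : Set ℝ} (hS : MeasurableSet S) (hae : ∀ᵐ u ∂κ, u ∈ S) : ∀ᵐ q ∂χ, q.2 ∈ S := by
  rw [ae_iff] at hae ⊢
  have h2 : {q : ℝ × ℝ | ¬ q.2 ∈ S} = Prod.snd ⁻¹' {u | ¬ u ∈ S} := rfl
  have h3 : {u : ℝ | ¬ u ∈ S} = Sᶜ := rfl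
  rw [h2, h3, ← Measure.map_apply measurable_snd hS.compl, h]
  rwa [h3] at hae

lemma integrable_comp_fst {χ : Measure (ℝ × ℝ)} {κ : Measure ℝ} (h : χ.map Prod.fst = κ)
    {f : ℝ → ℝ} (hf : Integrable f κ) : Integrable (fun q : ℝ × ℝ => f q.1) χ := by
  rw [← h] at hf
  exact (integrable_map_measure hf.aestronglyMeasurable measurable_fst.aemeasurable).1 hf

lemma integrable_comp_snd {χ : Measure (ℝ × ℝ)} {κ : Measure ℝ} (h : χ.map Prod.snd = κ)
    {f : ℝ → ℝ} (hf : Integrable f κ) : Integrable (fun q : ℝ × ℝ => f q.2) χ := by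
  rw [← h] at hf
  exact (integrable_map_measure hf.aestronglyMeasurable measurable_snd.aemeasurable).1 hf

end StmtAux

open StmtAux

/-- Lemma `lemEpsilon`: for `μ ≤_cx ν` and any lifted coupling with kernel `p`
between `μ` and `ν`, the lifted adapted Wasserstein distance `ÂW₁` to any lifted martingale
coupling is bounded below by `∫_{(0,1)} |∫ y p_u(dy) - F_μ^{-1}(u)| du`. -/
theorem stmt3
    (μ ν : Measure ℝ) [IsProbabilityMeasure μ] [IsProbabilityMeasure ν]
    (hμ1 : Integrable (fun x => |x|) μ) (hν1 : Integrable (fun x => |x|) ν)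
    (hcx : ConvexOrder μ ν)
    (p : ℝ → Measure ℝ) (hp : IsLiftedCoupling μ ν p)
    (m : ℝ → Measure ℝ) (hm : IsLiftedMartingale μ ν m) :
    ∫ u in Set.Ioo (0 : ℝ) 1, |(∫ y, y ∂(p u)) - qf μ u| ≤ lAWr 1 μ p μ m := by
  classical
  obtain ⟨hpm, hpprob, hpbind⟩ := hp
  obtain ⟨⟨hmm, hmprob, hmbind⟩, hmart⟩ := hm
  haveI := isProb_lam01
  have hLμ : L μ ≠ ⊤ := L_ne_top_of_integrable hμ1
  have hLν : L ν ≠ ⊤ := L_ne_top_of_integrable hν1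
  have habs : Measurable fun y : ℝ => ENNReal.ofReal |y| := measurable_abs.ennreal_ofReal
  -- absolute moment functions of the kernels
  have hApm : Measurable fun u => L (p u) :=
    (Measure.measurable_lintegral habs).comp hpm
  have hAmm : Measurable fun u => L (m u) :=
    (Measure.measurable_lintegral habs).comp hmm
  have hApint : ∫⁻ u, L (p u) ∂lam01 = L ν := by
    simp only [L]
    rw [← Measure.lintegral_bind hpm.aemeasurable habs.aemeasurable, hpbind]
  have hAmint : ∫⁻ u, L (m u) ∂lam01 = L ν := by
    simp only [L]
    rw [← Measure.lintegral_bind hmm.aemeasurable habs.aemeasurable, hmbind]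
  have hApae : ∀ᵐ u ∂lam01, L (p u) < ⊤ :=
    ae_lt_top hApm (by rw [hApint]; exact hLν)
  have hAmae : ∀ᵐ u ∂lam01, L (m u) < ⊤ :=
    ae_lt_top hAmm (by rw [hAmint]; exact hLν)
  -- measurable versions of the kernel means
  set Mp : ℝ → ℝ := fun u => (∫⁻ y, ENNReal.ofReal y ∂(p u)).toReal -
      (∫⁻ y, ENNReal.ofReal (-y) ∂(p u)).toReal with hMp
  set Mm : ℝ → ℝ := fun u => (∫⁻ y, ENNReal.ofReal y ∂(m u)).toReal -
      (∫⁻ y, ENNReal.ofReal (-y) ∂(m u)).toReal with hMm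
  have hMpm : Measurable Mp :=
    (((Measure.measurable_lintegral measurable_id.ennreal_ofReal).comp hpm).ennreal_toReal).sub
      (((Measure.measurable_lintegral measurable_id.neg.ennreal_ofReal).comp hpm).ennreal_toReal)
  have hMmm : Measurable Mm :=
    (((Measure.measurable_lintegral measurable_id.ennreal_ofReal).comp hmm).ennreal_toReal).sub
      (((Measure.measurable_lintegral measurable_id.neg.ennreal_ofReal).comp hmm).ennreal_toReal)
  -- on the good sets, they agree with the Bochner means
  have hMp_eq : ∀ u, L (p u) < ⊤ → Mp u = ∫ y, y ∂(p u) := by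
    intro u hu
    rw [integral_eq_lintegral_pos_part_sub_lintegral_neg_part (integrable_id_of_L hu.ne)]
  have hMm_eq : ∀ u, L (m u) < ⊤ → Mm u = ∫ y, y ∂(m u) := by
    intro u hu
    rw [integral_eq_lintegral_pos_part_sub_lintegral_neg_part (integrable_id_of_L hu.ne)]
  -- good sets
  set Gp : Set ℝ := {u | L (p u) < ⊤} with hGp
  set Gm : Set ℝ := {u | L (m u) < ⊤ ∧ Mm u = qf μ u} with hGm
  have hGpmeas : MeasurableSet Gp := hApm measurableSet_Iio
  have hGmmeas : MeasurableSet Gm :=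
    (hAmm measurableSet_Iio).inter (measurableSet_eq_fun hMmm (measurable_qf μ))
  have hGpae : ∀ᵐ u ∂lam01, u ∈ Gp := hApae
  have hGmae : ∀ᵐ u ∂lam01, u ∈ Gm := by
    filter_upwards [hmart, hAmae] with u h1 h2
    exact ⟨h2, by rw [hMm_eq u h2, h1]⟩
  -- the target integrand and its measurable version
  set tfun : ℝ → ℝ := fun u => |(∫ y, y ∂(p u)) - qf μ u| with htfun
  set τ : ℝ → ℝ := fun u => |Mp u - qf μ u| with hτ
  have hτm : Measurable τ := (hMpm.sub (measurable_qf μ)).abs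
  have htae : tfun =ᵐ[lam01] τ := by
    filter_upwards [hGpae] with u hu
    rw [htfun, hτ]
    dsimp only
    rw [hMp_eq u hu]
  -- integrability of the target
  have hqfint : Integrable (qf μ) lam01 := integrable_qf_of hLμ
  have hApR_int : Integrable (fun u => (L (p u)).toReal) lam01 := by
    refine ⟨hApm.ennreal_toReal.aestronglyMeasurable, ?_⟩
    rw [hasFiniteIntegral_iff_norm]
    have hb : ∀ u : ℝ, ENNReal.ofReal ‖(L (p u)).toReal‖ ≤ L (p u) := by
      intro u
      rw [Real.norm_eq_abs, abs_of_nonneg ENNReal.toReal_nonneg]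
      exact ENNReal.ofReal_toReal_le
    exact lt_of_le_of_lt (lintegral_mono hb) (by rw [hApint]; exact hLν.lt_top)
  have hAmR_int : Integrable (fun u => (L (m u)).toReal) lam01 := by
    refine ⟨hAmm.ennreal_toReal.aestronglyMeasurable, ?_⟩
    rw [hasFiniteIntegral_iff_norm]
    have hb : ∀ u : ℝ, ENNReal.ofReal ‖(L (m u)).toReal‖ ≤ L (m u) := by
      intro u
      rw [Real.norm_eq_abs, abs_of_nonneg ENNReal.toReal_nonneg]
      exact ENNReal.ofReal_toReal_le
    exact lt_of_le_of_lt (lintegral_mono hb) (by rw [hAmint]; exact hLν.lt_top)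
  have hτint : Integrable τ lam01 := by
    apply Integrable.mono' (hApR_int.add hqfint.abs) hτm.aestronglyMeasurable
    filter_upwards [hGpae] with u hu
    simp only [Pi.add_apply]
    rw [Real.norm_eq_abs, hτ]
    dsimp only
    rw [abs_abs]
    have h1 : |Mp u - qf μ u| ≤ |Mp u| + |qf μ u| := abs_sub _ _
    have h2 : |Mp u| ≤ (L (p u)).toReal := by
      rw [hMp_eq u hu]
      haveI := hpprob u
      have h3 : |∫ y, y ∂(p u)| ≤ ∫ y, |y| ∂(p u) := by
        have := norm_integral_le_integral_norm (μ := p u) (f := fun y : ℝ => y)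
        simpa [Real.norm_eq_abs] using this
      have h4 : ∫ y, |y| ∂(p u) = (L (p u)).toReal := by
        rw [L, integral_eq_lintegral_of_nonneg_ae
          (Filter.Eventually.of_forall fun y => abs_nonneg y)
          measurable_abs.aestronglyMeasurable]
      linarith [h3, h4.le, h4.ge]
    linarith
  have htint : Integrable tfun lam01 := hτint.congr htae.symm
  -- now the infimum bound
  rw [lAWr]
  have hdiag : IsCoupling (lam01.map fun u => (u, u)) lam01 lam01 := by
    have hdm : Measurable fun u : ℝ => (u, u) := measurable_id.prodMk measurable_id
    constructor
    · rw [Measure.map_map measurable_fst hdm]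
      have h : (Prod.fst ∘ fun u : ℝ => (u, u)) = id := rfl
      rw [h, Measure.map_id]
    · rw [Measure.map_map measurable_snd hdm]
      have h : (Prod.snd ∘ fun u : ℝ => (u, u)) = id := rfl
      rw [h, Measure.map_id]
  refine le_csInf ⟨_, lam01.map fun u => (u, u), hdiag, rfl⟩ ?_
  rintro c ⟨χ, hχ, rfl⟩
  haveI : IsProbabilityMeasure χ := coupling_prob hχ
  -- measurable version of the integrand
  set G : ℝ × ℝ → ℝ := fun q =>
    |q.1 - q.2| + |qf μ q.1 - qf μ q.2| + (J (p q.1) (m q.2)).toReal with hG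
  have hqf_joint_p : Measurable fun z : (ℝ × ℝ) × ℝ => qf (p z.1.1) z.2 :=
    (measurable_qf_family p hpm hpprob).comp
      ((measurable_fst.comp measurable_fst).prodMk measurable_snd)
  have hqf_joint_m : Measurable fun z : (ℝ × ℝ) × ℝ => qf (m z.1.2) z.2 :=
    (measurable_qf_family m hmm hmprob).comp
      ((measurable_snd.comp measurable_fst).prodMk measurable_snd)
  have hJmeas : Measurable fun q : ℝ × ℝ => J (p q.1) (m q.2) := by
    have : Measurable fun z : (ℝ × ℝ) × ℝ =>
        ENNReal.ofReal |qf (p z.1.1) z.2 - qf (m z.1.2) z.2| :=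
      (hqf_joint_p.sub hqf_joint_m).abs.ennreal_ofReal
    exact this.lintegral_prod_right'
  have hGmeas : Measurable G :=
    (((measurable_fst.sub measurable_snd).abs.add
      (((measurable_qf μ).comp measurable_fst).sub
        ((measurable_qf μ).comp measurable_snd)).abs)).add hJmeas.ennreal_toReal
  -- a.e. facts under χ
  have hfst_Gp : ∀ᵐ q ∂χ, q.1 ∈ Gp := ae_fst_mem hχ.1 hGpmeas hGpae
  have hsnd_Gm : ∀ᵐ q ∂χ, q.2 ∈ Gm := ae_snd_mem hχ.2 hGmmeas hGmae
  have hIoo_ae : ∀ᵐ u ∂lam01, u ∈ Set.Ioo (0:ℝ) 1 := by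
    rw [lam01]
    exact ae_restrict_mem measurableSet_Ioo
  have hfst_Ioo : ∀ᵐ q ∂χ, q.1 ∈ Set.Ioo (0:ℝ) 1 := ae_fst_mem hχ.1 measurableSet_Ioo hIoo_ae
  have hsnd_Ioo : ∀ᵐ q ∂χ, q.2 ∈ Set.Ioo (0:ℝ) 1 := ae_snd_mem hχ.2 measurableSet_Ioo hIoo_ae
  -- the lAWr integrand equals G a.e.
  have hae_G : (fun q : ℝ × ℝ => |q.1 - q.2| ^ (1:ℝ) + |qf μ q.1 - qf μ q.2| ^ (1:ℝ) +
      Wr 1 (p q.1) (m q.2)) =ᵐ[χ] G := by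
    filter_upwards [hfst_Gp, hsnd_Gm] with q h1 h2
    haveI := hpprob q.1
    haveI := hmprob q.2
    rw [hG]
    dsimp only
    rw [Real.rpow_one, Real.rpow_one, W1_eq (p q.1) (m q.2) h1.ne h2.1.ne]
  -- integrability of G
  have hGint : Integrable G χ := by
    have hHint : Integrable (fun q : ℝ × ℝ => 2 + (|qf μ q.1| + |qf μ q.2|) +
        ((L (p q.1)).toReal + (L (m q.2)).toReal)) χ := by
      apply Integrable.add
      apply Integrable.add
      · exact integrable_const 2
      · exact (integrable_comp_fst hχ.1 hqfint.abs).add (integrable_comp_snd hχ.2 hqfint.abs)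
      · exact (integrable_comp_fst hχ.1 hApR_int).add (integrable_comp_snd hχ.2 hAmR_int)
    apply Integrable.mono' hHint hGmeas.aestronglyMeasurable
    filter_upwards [hfst_Gp, hsnd_Gm, hfst_Ioo, hsnd_Ioo] with q h1 h2 h3 h4
    haveI := hpprob q.1
    haveI := hmprob q.2
    have hG0 : 0 ≤ G q := by
      rw [hG]
      have := ENNReal.toReal_nonneg (a := J (p q.1) (m q.2))
      positivity
    rw [Real.norm_eq_abs, abs_of_nonneg hG0, hG]
    dsimp only
    have hb1 : |q.1 - q.2| ≤ 2 := by
      rw [abs_sub_le_iff]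
      constructor <;> nlinarith [h3.1, h3.2, h4.1, h4.2]
    have hb2 : |qf μ q.1 - qf μ q.2| ≤ |qf μ q.1| + |qf μ q.2| := abs_sub _ _
    have hb3 : (J (p q.1) (m q.2)).toReal ≤ (L (p q.1)).toReal + (L (m q.2)).toReal := by
      have hJle : J (p q.1) (m q.2) ≤ L (p q.1) + L (m q.2) := J_le_L_add_L _ _
      have hfin : L (p q.1) + L (m q.2) ≠ ⊤ := by
        rw [← lt_top_iff_ne_top]
        exact ENNReal.add_lt_top.2 ⟨h1, h2.1⟩
      have := ENNReal.toReal_mono hfin hJle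
      rwa [ENNReal.toReal_add h1.ne h2.1.ne] at this
    linarith
  -- pointwise comparison
  have hcomp : (fun q : ℝ × ℝ => tfun q.1) ≤ᵐ[χ] G := by
    filter_upwards [hfst_Gp, hsnd_Gm] with q h1 h2
    haveI := hpprob q.1
    haveI := hmprob q.2
    have hmean : ∫ y, y ∂(m q.2) = qf μ q.2 := by rw [← hMm_eq q.2 h2.1, h2.2]
    have hgap : |(∫ y, y ∂(p q.1)) - ∫ y, y ∂(m q.2)| ≤ Wr 1 (p q.1) (m q.2) :=
      mean_gap (p q.1) (m q.2) h1.ne h2.1.ne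
    have htri : tfun q.1 ≤ |(∫ y, y ∂(p q.1)) - ∫ y, y ∂(m q.2)| + |qf μ q.1 - qf μ q.2| := by
      rw [htfun]
      dsimp only
      rw [hmean]
      have := abs_sub_abs_le_abs_sub ((∫ y, y ∂(p q.1)) - qf μ q.1) 0
      calc |(∫ y, y ∂(p q.1)) - qf μ q.1|
          = |((∫ y, y ∂(p q.1)) - qf μ q.2) + (qf μ q.2 - qf μ q.1)| := by ring_nf
        _ ≤ |(∫ y, y ∂(p q.1)) - qf μ q.2| + |qf μ q.2 - qf μ q.1| := abs_add_le _ _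
        _ = |(∫ y, y ∂(p q.1)) - qf μ q.2| + |qf μ q.1 - qf μ q.2| := by
            rw [abs_sub_comm (qf μ q.2) (qf μ q.1)]
    have hW : Wr 1 (p q.1) (m q.2) = (J (p q.1) (m q.2)).toReal :=
      W1_eq (p q.1) (m q.2) h1.ne h2.1.ne
    rw [hG]
    dsimp only
    have habs0 : (0:ℝ) ≤ |q.1 - q.2| := abs_nonneg _
    calc tfun q.1 ≤ |(∫ y, y ∂(p q.1)) - ∫ y, y ∂(m q.2)| + |qf μ q.1 - qf μ q.2| := htri
      _ ≤ Wr 1 (p q.1) (m q.2) + |qf μ q.1 - qf μ q.2| := by linarith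
      _ = (J (p q.1) (m q.2)).toReal + |qf μ q.1 - qf μ q.2| := by rw [hW]
      _ ≤ |q.1 - q.2| + |qf μ q.1 - qf μ q.2| + (J (p q.1) (m q.2)).toReal := by linarith
  -- final chain
  have htint_fst : Integrable (fun q : ℝ × ℝ => tfun q.1) χ := integrable_comp_fst hχ.1 htint
  have hstep1 : ∫ u in Set.Ioo (0:ℝ) 1, tfun u = ∫ q, tfun q.1 ∂χ := by
    have h1 : ∫ u in Set.Ioo (0:ℝ) 1, tfun u = ∫ u, tfun u ∂lam01 := rfl
    rw [h1, ← hχ.1, integral_map measurable_fst.aemeasurable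
      (by rw [hχ.1]; exact htint.aestronglyMeasurable)]
  have hstep2 : ∫ q, tfun q.1 ∂χ ≤ ∫ q, G q ∂χ := integral_mono_ae htint_fst hGint hcomp
  have hstep3 : ∫ q, (|q.1 - q.2| ^ (1:ℝ) + |qf μ q.1 - qf μ q.2| ^ (1:ℝ) +
      Wr 1 (p q.1) (m q.2)) ∂χ = ∫ q, G q ∂χ := integral_congr_ae hae_G
  calc ∫ u in Set.Ioo (0:ℝ) 1, tfun u = ∫ q, tfun q.1 ∂χ := hstep1
    _ ≤ ∫ q, G q ∂χ := hstep2
    _ = _ := hstep3.symm
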